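/- For ADMM iterates with convex f and g, the successive-difference energy E(k) = (1/2s)‖G(y_{k+1} − y_k)‖² + (s/2)‖λ_{k+1} − λ_k‖² is nonincreasing in k. -/

import Mathlib

open ContinuousLinearMap RealInnerProductSpace

/-- `v` is a subgradient of `f` at `x`. -/
def SubgradientAt {E : Type*} [NormedAddCommGroup E] [InnerProductSpace ℝ E]
    (f : E → ℝ) (x v : E) : Prop :=
  ∀ y, f x + (inner ℝ v (y - x) : ℝ) ≤ f y

lemma subgrad_mono {E : Type*} [NormedAddCommGroup E] [InnerProductSpace ℝ E]
    {f : E → ℝ} {p q u v : E} (hu : SubgradientAt f p u) (hv : SubgradientAt f q v) :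
    (0 : ℝ) ≤ ⟪u - v, p - q⟫ := by
  have h1 := hu q
  have h2 := hv p
  have e1 : (inner ℝ u (q - p) : ℝ) = -(inner ℝ u (p - q) : ℝ) := by
    rw [← inner_neg_right, neg_sub]
  rw [inner_sub_left]
  linarith

/-- The successive-difference energy of the ADMM iterates is nonincreasing. -/
theorem admm_successive_difference_energy_nonincreasing
    {E1 E2 Em : Type*}
    [NormedAddCommGroup E1] [InnerProductSpace ℝ E1] [CompleteSpace E1]
    [NormedAddCommGroup E2] [InnerProductSpace ℝ E2] [CompleteSpace E2]
    [NormedAddCommGroup Em] [InnerProductSpace ℝ Em] [CompleteSpace Em]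
    (f : E1 → ℝ) (g : E2 → ℝ)
    (hfconv : ConvexOn ℝ Set.univ f) (hgconv : ConvexOn ℝ Set.univ g)
    (F : E1 →L[ℝ] Em) (G : E2 →L[ℝ] Em) (h : Em) (s : ℝ) (hs : 0 < s)
    (x : ℕ → E1) (y : ℕ → E2) (lam : ℕ → Em)
    (hoptx : ∀ k, SubgradientAt f (x (k + 1))
      ((1 / s) • adjoint F (G (y (k + 1)) - G (y k)) - adjoint F (lam (k + 1))))
    (hopty : ∀ k, SubgradientAt g (y (k + 1)) (-adjoint G (lam (k + 1))))
    (hoptlam : ∀ k, s • (lam (k + 1) - lam k) = F (x (k + 1)) + G (y (k + 1)) - h) :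
    ∀ k : ℕ,
      (1 / (2 * s)) * ‖G (y (k + 2)) - G (y (k + 1))‖ ^ 2
          + (s / 2) * ‖lam (k + 2) - lam (k + 1)‖ ^ 2
        ≤ (1 / (2 * s)) * ‖G (y (k + 1)) - G (y k)‖ ^ 2
          + (s / 2) * ‖lam (k + 1) - lam k‖ ^ 2 := by
  intro k
  have hs0 : s ≠ 0 := ne_of_gt hs
  have eidx : k + 1 + 1 = k + 2 := rfl
  set A := G (y (k + 1)) - G (y k) with hA
  set B := G (y (k + 2)) - G (y (k + 1)) with hB
  set C := lam (k + 1) - lam k with hC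
  set D := lam (k + 2) - lam (k + 1) with hD
  -- g monotonicity: ⟪D, B⟫ ≤ 0
  have hg : ⟪D, B⟫ ≤ 0 := by
    have hm := subgrad_mono (hopty (k + 1)) (hopty k)
    rw [eidx] at hm
    have huv : (-adjoint G (lam (k + 2))) - (-adjoint G (lam (k + 1)))
        = adjoint G (-D) := by
      rw [hD, map_neg, map_sub]; abel
    rw [huv, adjoint_inner_left, inner_neg_left, map_sub] at hm
    rw [← hB] at hm
    linarith
  -- λ update: F x_{k+2} - F x_{k+1} = s•D - s•C - B
  have hF : F (x (k + 2)) - F (x (k + 1)) = s • D - s • C - B := by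
    have h1 := hoptlam k
    have h2 := hoptlam (k + 1)
    rw [eidx] at h2
    rw [hB, hC, hD, h2, h1]
    abel
  -- f monotonicity
  have keym : (0 : ℝ) ≤ ⟪(B - A) - s • D, s • D - s • C - B⟫ := by
    have hm := subgrad_mono (hoptx (k + 1)) (hoptx k)
    rw [eidx] at hm
    have huv : ((1 / s) • adjoint F (G (y (k + 2)) - G (y (k + 1))) - adjoint F (lam (k + 2)))
        - ((1 / s) • adjoint F (G (y (k + 1)) - G (y k)) - adjoint F (lam (k + 1)))
        = adjoint F ((1 / s) • (B - A) - D) := by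
      rw [hA, hB, hD]
      simp only [map_sub, map_smul, smul_sub]
      module
    rw [huv, adjoint_inner_left, map_sub, hF] at hm
    have e : (B - A) - s • D = s • ((1 / s) • (B - A) - D) := by
      rw [smul_sub s ((1 / s) • (B - A)) D, smul_smul, mul_one_div, div_self hs0, one_smul]
    rw [e, real_inner_smul_left]
    exact mul_nonneg hs.le hm
  clear_value A B C D
  clear hA hB hC hD hF hoptx hopty hoptlam
  -- scalar computations
  have e1 : ⟪(B - A) - s • D, s • D - s • C - B⟫
      = s * ⟪B - A, D - C⟫ + s * ⟪D, B⟫ - ⟪B, B - A⟫ - s ^ 2 * ⟪D, D - C⟫ := by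
    simp only [inner_sub_left, inner_sub_right, real_inner_smul_left, real_inner_smul_right]
    rw [real_inner_comm A B, real_inner_comm B D, real_inner_comm C D]
    ring
  have e2 : ⟪B, B - A⟫ = (‖B‖ ^ 2 - ‖A‖ ^ 2 + ‖B - A‖ ^ 2) / 2 := by
    rw [inner_sub_right, real_inner_self_eq_norm_sq, norm_sub_sq_real B A]
    ring
  have e3 : s ^ 2 * ⟪D, D - C⟫ = s ^ 2 * ((‖D‖ ^ 2 - ‖C‖ ^ 2 + ‖D - C‖ ^ 2) / 2) := by
    rw [inner_sub_right, real_inner_self_eq_norm_sq, norm_sub_sq_real D C]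
    ring
  have hcs : ⟪B - A, D - C⟫ ≤ ‖B - A‖ * ‖D - C‖ := real_inner_le_norm _ _
  have hcs' : s * ⟪B - A, D - C⟫ ≤ s * (‖B - A‖ * ‖D - C‖) :=
    mul_le_mul_of_nonneg_left hcs hs.le
  have hg' : s * ⟪D, B⟫ ≤ 0 := by nlinarith
  have hmain : ‖B‖ ^ 2 - ‖A‖ ^ 2 + s ^ 2 * (‖D‖ ^ 2 - ‖C‖ ^ 2) ≤ 0 := by
    nlinarith [keym, e1, e2, e3, hcs', hg', sq_nonneg (‖B - A‖ - s * ‖D - C‖)]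
  have hcoef : (0 : ℝ) ≤ 1 / (2 * s) := by positivity
  have key3 : (0 : ℝ) ≤ (1 / (2 * s)) * (‖A‖ ^ 2 - ‖B‖ ^ 2 + s ^ 2 * (‖C‖ ^ 2 - ‖D‖ ^ 2)) := by
    apply mul_nonneg hcoef; linarith
  have efin : (1 / (2 * s)) * (‖A‖ ^ 2 - ‖B‖ ^ 2 + s ^ 2 * (‖C‖ ^ 2 - ‖D‖ ^ 2))
      = (1 / (2 * s)) * ‖A‖ ^ 2 - (1 / (2 * s)) * ‖B‖ ^ 2
        + (s / 2) * ‖C‖ ^ 2 - (s / 2) * ‖D‖ ^ 2 := by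
    field_simp
    ring
  rw [efin] at key3
  linarith
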